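/- In finite Hex, no position admits simultaneously a Red winning chain and a Blue winning chain. -/

import Mathlib

/-- Hexagonal adjacency on the grid model of the Hex board: the six neighbours of a
tile are obtained by the displacements `(±1,0)`, `(0,±1)`, `(1,-1)` and `(-1,1)`. -/
def hexAdj (p q : ℤ × ℤ) : Prop :=
  (p.1 - q.1, p.2 - q.2) ∈
    ({(1, 0), (-1, 0), (0, 1), (0, -1), (1, -1), (-1, 1)} : Set (ℤ × ℤ))

/-- A winning chain for the player `red` in a position `c` of the `n × n` Hex board
(a partial assignment of tiles to the players: `some true` = Red, `some false` = Blue,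
`none` = empty): a nonempty list of tiles of that player's colour, consecutively
hex-adjacent, containing a tile on each of that player's two opposite sides. -/
def WinningChainPos (n : ℕ) (c : Fin n × Fin n → Option Bool) (red : Bool) : Prop :=
  ∃ l : List (Fin n × Fin n), l ≠ [] ∧
    (∀ t ∈ l, c t = some red) ∧
    l.Chain' (fun a b => hexAdj ((a.1 : ℤ), (a.2 : ℤ)) ((b.1 : ℤ), (b.2 : ℤ))) ∧
    (if red then
      (∃ a ∈ l, (a.1 : ℕ) = 0) ∧ (∃ b ∈ l, (b.1 : ℕ) = n - 1)
    else
      (∃ a ∈ l, (a.2 : ℕ) = 0) ∧ (∃ b ∈ l, (b.2 : ℕ) = n - 1))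

namespace HexAux

/-- crossing indicator for the edge `(u,v)` w.r.t. the leftward ray just above `q` -/
def cQ (q u v : ℤ × ℤ) : ZMod 2 :=
  if (u.1 = q.1 ∧ v.1 = q.1 + 1 ∧ u.2 < q.2) ∨ (v.1 = q.1 ∧ u.1 = q.1 + 1 ∧ v.2 < q.2)
  then 1 else 0

def gQ (p w : ℤ × ℤ) : ZMod 2 := if w.1 = p.1 ∧ w.2 < p.2 then 1 else 0

def phi (r : ℤ) (w : ℤ × ℤ) : ZMod 2 := if w.1 ≤ r then 1 else 0

def esum (h : ℤ × ℤ → ℤ × ℤ → ZMod 2) : List (ℤ × ℤ) → ZMod 2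
  | [] => 0
  | [_] => 0
  | u :: v :: rest => h u v + esum h (v :: rest)

def corr (N : ℤ) (q las : ℤ × ℤ) : ZMod 2 := if q.1 = N - 1 ∧ las.2 < q.2 then 1 else 0

def Fval (N : ℤ) (L : List (ℤ × ℤ)) (hne : L ≠ []) (q : ℤ × ℤ) : ZMod 2 :=
  esum (cQ q) L + corr N q (L.getLast hne)

lemma z2 (a : ZMod 2) : a + a = 0 := by revert a; decide

lemma z2' {a b : ZMod 2} (h : a + b = 0) : a = b := by revert a b; decide

lemma esum_add (h1 h2 : ℤ × ℤ → ℤ × ℤ → ZMod 2) :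
    ∀ L, esum (fun u v => h1 u v + h2 u v) L = esum h1 L + esum h2 L
  | [] => by simp [esum]
  | [a] => by simp [esum]
  | a :: b :: L => by
    have := esum_add h1 h2 (b :: L)
    simp only [esum, this]; ring

lemma tele (h : ℤ × ℤ → ℤ × ℤ → ZMod 2) (g : ℤ × ℤ → ZMod 2) (M : ℤ × ℤ → Prop)
    (hloc : ∀ u v, M u → M v → hexAdj u v → h u v = g u + g v) :
    ∀ (L : List (ℤ × ℤ)) (hne : L ≠ []), L.Chain' hexAdj → (∀ x ∈ L, M x) →
      esum h L = g (L.head hne) + g (L.getLast hne)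
  | [], hne => absurd rfl hne
  | [a], _ => fun _ _ => by simp [esum, List.getLast, (z2 (g a)).symm]
  | a :: b :: L, _ => fun hch hm => by
    rw [List.Chain', List.isChain_cons_cons] at hch
    have IH := tele h g M hloc (b :: L) (by simp) hch.2
      (fun x hx => hm x (List.mem_cons_of_mem _ hx))
    have hab : h a b = g a + g b :=
      hloc a b (hm a (by simp)) (hm b (by simp)) hch.1
    have hgl : (a :: b :: L).getLast (by simp) = (b :: L).getLast (by simp) :=
      List.getLast_cons (by simp)
    simp only [esum, hab, IH, hgl, List.head_cons]
    linear_combination (z2 (g b))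

lemma hexAdj_arith {u v : ℤ × ℤ} (h : hexAdj u v) :
    (u.1 - v.1 = 1 ∧ u.2 - v.2 = 0) ∨ (u.1 - v.1 = -1 ∧ u.2 - v.2 = 0) ∨
    (u.1 - v.1 = 0 ∧ u.2 - v.2 = 1) ∨ (u.1 - v.1 = 0 ∧ u.2 - v.2 = -1) ∨
    (u.1 - v.1 = 1 ∧ u.2 - v.2 = -1) ∨ (u.1 - v.1 = -1 ∧ u.2 - v.2 = 1) := by
  simpa [hexAdj, Set.mem_insert_iff, Set.mem_singleton_iff, Prod.ext_iff] using h

lemma loc_same (q q' u v : ℤ × ℤ) (h1 : q'.1 = q.1) (h2 : q'.2 = q.2 + 1)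
    (hu : u ≠ q) (hv : v ≠ q) : cQ q u v = cQ q' u v := by
  obtain ⟨q1, q2⟩ := q; obtain ⟨q1', q2'⟩ := q'
  obtain ⟨u1, u2⟩ := u; obtain ⟨v1, v2⟩ := v
  unfold cQ
  simp only [ne_eq, Prod.mk.injEq, not_and] at *
  split_ifs with ha hb <;> first | rfl | (exfalso; omega)

lemma loc_up (q q' u v : ℤ × ℤ) (h1 : q'.1 = q.1 + 1) (h2 : q'.2 = q.2 ∨ q'.2 = q.2 - 1)
    (hadj : hexAdj u v) (hu : u ≠ q) (hv : v ≠ q) (hu' : u ≠ q') (hv' : v ≠ q') :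
    cQ q u v + cQ q' u v = gQ q' u + gQ q' v := by
  have harith := hexAdj_arith hadj
  clear hadj
  obtain ⟨q1, q2⟩ := q; obtain ⟨q1', q2'⟩ := q'
  obtain ⟨u1, u2⟩ := u; obtain ⟨v1, v2⟩ := v
  unfold cQ gQ
  simp only [ne_eq, Prod.mk.injEq, not_and] at *
  rcases harith with ⟨ha,hb⟩|⟨ha,hb⟩|⟨ha,hb⟩|⟨ha,hb⟩|⟨ha,hb⟩|⟨ha,hb⟩ <;>
    rcases h2 with h2|h2 <;>
    split_ifs <;> first | decide | (exfalso; omega)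

lemma loc_end (N : ℤ) (q u v : ℤ × ℤ) (hq : q.2 = N - 1)
    (hadj : hexAdj u v)
    (hub : 0 ≤ u.2 ∧ u.2 ≤ N - 1) (hvb : 0 ≤ v.2 ∧ v.2 ≤ N - 1)
    (hu : u ≠ q) (hv : v ≠ q) :
    cQ q u v = phi q.1 u + phi q.1 v := by
  have harith := hexAdj_arith hadj
  clear hadj
  obtain ⟨q1, q2⟩ := q
  obtain ⟨u1, u2⟩ := u; obtain ⟨v1, v2⟩ := v
  unfold cQ phi
  simp only [ne_eq, Prod.mk.injEq, not_and] at *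
  rcases harith with ⟨ha,hb⟩|⟨ha,hb⟩|⟨ha,hb⟩|⟨ha,hb⟩|⟨ha,hb⟩|⟨ha,hb⟩ <;>
    split_ifs <;> first | decide | (exfalso; omega)

lemma loc_zero (q u v : ℤ × ℤ) (hq : q.2 = 0)
    (hub : 0 ≤ u.2) (hvb : 0 ≤ v.2) : cQ q u v = 0 := by
  obtain ⟨q1, q2⟩ := q
  obtain ⟨u1, u2⟩ := u; obtain ⟨v1, v2⟩ := v
  unfold cQ
  simp only [ne_eq, Prod.mk.injEq, not_and] at *
  rw [if_neg]; omega

lemma corr_congr_horiz (N : ℤ) (q q' las : ℤ × ℤ) (h1 : q'.1 = q.1) (h2 : q'.2 = q.2 + 1)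
    (hlas : las ≠ q) (hlast1 : las.1 = N - 1) : corr N q las = corr N q' las := by
  have hne2 : ¬(las.1 = q.1 ∧ las.2 = q.2) := fun h => hlas (Prod.ext_iff.mpr h)
  unfold corr
  split_ifs <;> first | rfl | (exfalso; omega)

lemma Fstep_horiz (N : ℤ) (P : List (ℤ × ℤ)) (hne : P ≠ []) (hch : P.Chain' hexAdj)
    (hlast : (P.getLast hne).1 = N - 1)
    (q q' : ℤ × ℤ) (h1 : q'.1 = q.1) (h2 : q'.2 = q.2 + 1)
    (hdisj : ∀ x ∈ P, x ≠ q) :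
    Fval N P hne q = Fval N P hne q' := by
  have h0 := tele (fun u v => cQ q u v + cQ q' u v) (fun _ => 0) (fun x => x ≠ q)
    (fun u v hu hv _ => by
      show cQ q u v + cQ q' u v = (0 : ZMod 2) + 0
      rw [loc_same q q' u v h1 h2 hu hv, z2]; simp)
    P hne hch hdisj
  rw [esum_add] at h0
  have hsum : esum (cQ q) P = esum (cQ q') P := z2' (by rw [h0]; simp)
  unfold Fval
  rw [hsum, corr_congr_horiz N q q' (P.getLast hne) h1 h2 (hdisj _ (List.getLast_mem hne)) hlast]

lemma Fstep_up (N : ℤ) (P : List (ℤ × ℤ)) (hne : P ≠ []) (hch : P.Chain' hexAdj)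
    (hhead : (P.head hne).1 = 0) (hlast : (P.getLast hne).1 = N - 1)
    (q q' : ℤ × ℤ) (h1 : q'.1 = q.1 + 1) (h2 : q'.2 = q.2 ∨ q'.2 = q.2 - 1)
    (hq0 : 0 ≤ q.1) (hq1 : q'.1 ≤ N - 1)
    (hdisj : ∀ x ∈ P, x ≠ q ∧ x ≠ q') :
    Fval N P hne q = Fval N P hne q' := by
  have h0 := tele (fun u v => cQ q u v + cQ q' u v) (gQ q') (fun x => x ≠ q ∧ x ≠ q')
    (fun u v hu hv hadj => loc_up q q' u v h1 h2 hadj hu.1 hv.1 hu.2 hv.2)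
    P hne hch hdisj
  rw [esum_add] at h0
  have hh : gQ q' (P.head hne) = 0 := by
    unfold gQ; rw [if_neg]; rintro ⟨hc, -⟩; omega
  rw [hh] at h0
  have hcq : corr N q (P.getLast hne) = 0 := by
    unfold corr; rw [if_neg]; rintro ⟨hc, -⟩; omega
  have hcq' : corr N q' (P.getLast hne) = gQ q' (P.getLast hne) := by
    unfold corr gQ; split_ifs <;> first | rfl | (exfalso; omega)
  unfold Fval
  apply z2'
  rw [hcq, hcq']
  linear_combination h0 + z2 (gQ q' (P.getLast hne))

lemma Fstep (N : ℤ) (P : List (ℤ × ℤ)) (hne : P ≠ []) (hch : P.Chain' hexAdj)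
    (hhead : (P.head hne).1 = 0) (hlast : (P.getLast hne).1 = N - 1)
    (q q' : ℤ × ℤ)
    (hq : 0 ≤ q.1 ∧ q.1 ≤ N - 1) (hq' : 0 ≤ q'.1 ∧ q'.1 ≤ N - 1)
    (hadj : hexAdj q q') (hdisj : ∀ x ∈ P, x ≠ q ∧ x ≠ q') :
    Fval N P hne q = Fval N P hne q' := by
  have hdisj1 : ∀ x ∈ P, x ≠ q := fun x hx => (hdisj x hx).1
  have hdisj2 : ∀ x ∈ P, x ≠ q' := fun x hx => (hdisj x hx).2
  have hdisj' : ∀ x ∈ P, x ≠ q' ∧ x ≠ q := fun x hx => ⟨(hdisj x hx).2, (hdisj x hx).1⟩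
  rcases hexAdj_arith hadj with ⟨ha,hb⟩|⟨ha,hb⟩|⟨ha,hb⟩|⟨ha,hb⟩|⟨ha,hb⟩|⟨ha,hb⟩
  · exact (Fstep_up N P hne hch hhead hlast q' q (by omega) (Or.inl (by omega))
      (by omega) (by omega) hdisj').symm
  · exact Fstep_up N P hne hch hhead hlast q q' (by omega) (Or.inl (by omega))
      (by omega) (by omega) hdisj
  · exact (Fstep_horiz N P hne hch hlast q' q (by omega) (by omega) hdisj2).symm
  · exact Fstep_horiz N P hne hch hlast q q' (by omega) (by omega) hdisj1
  · exact (Fstep_up N P hne hch hhead hlast q' q (by omega) (Or.inr (by omega))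
      (by omega) (by omega) hdisj').symm
  · exact Fstep_up N P hne hch hhead hlast q q' (by omega) (Or.inr (by omega))
      (by omega) (by omega) hdisj

lemma Fconst (N : ℤ) (P : List (ℤ × ℤ)) (hneP : P ≠ []) (hch : P.Chain' hexAdj)
    (hhead : (P.head hneP).1 = 0) (hlast : (P.getLast hneP).1 = N - 1) :
    ∀ (L : List (ℤ × ℤ)) (hne : L ≠ []), L.Chain' hexAdj →
      (∀ x ∈ L, (0 ≤ x.1 ∧ x.1 ≤ N - 1) ∧ ∀ y ∈ P, y ≠ x) →
      Fval N P hneP (L.head hne) = Fval N P hneP (L.getLast hne)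
  | [], hne => absurd rfl hne
  | [a], _ => fun _ _ => by simp
  | a :: b :: L, _ => fun hch' hm => by
    rw [List.Chain', List.isChain_cons_cons] at hch'
    have IH := Fconst N P hneP hch hhead hlast (b :: L) (by simp) hch'.2
      (fun x hx => hm x (List.mem_cons_of_mem _ hx))
    have step := Fstep N P hneP hch hhead hlast a b (hm a (by simp)).1 (hm b (by simp)).1
      hch'.1 (fun x hx => ⟨(hm a (by simp)).2 x hx, (hm b (by simp)).2 x hx⟩)
    have hgl : (a :: b :: L).getLast (by simp) = (b :: L).getLast (by simp) :=
      List.getLast_cons (by simp)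
    simp only [List.head_cons, hgl]
    exact step.trans IH

lemma Fzero (N : ℤ) (P : List (ℤ × ℤ)) (hne : P ≠ []) (hch : P.Chain' hexAdj)
    (hm : ∀ x ∈ P, 0 ≤ x.2) (q : ℤ × ℤ) (hq : q.2 = 0) :
    Fval N P hne q = 0 := by
  have h0 := tele (cQ q) (fun _ => 0) (fun x => 0 ≤ x.2)
    (fun u v hu hv _ => by
      show cQ q u v = (0 : ZMod 2) + 0
      rw [loc_zero q u v hq hu hv]; simp) P hne hch hm
  unfold Fval
  rw [h0]
  have hc : corr N q (P.getLast hne) = 0 := by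
    unfold corr; rw [if_neg]
    rintro ⟨-, hcc⟩
    have := hm _ (List.getLast_mem hne); omega
  rw [hc]; simp

lemma Fend (N : ℤ) (P : List (ℤ × ℤ)) (hne : P ≠ []) (hch : P.Chain' hexAdj)
    (hhead : (P.head hne).1 = 0) (hlast : (P.getLast hne).1 = N - 1)
    (hm : ∀ x ∈ P, 0 ≤ x.2 ∧ x.2 ≤ N - 1)
    (q : ℤ × ℤ) (hq2 : q.2 = N - 1) (hq : 0 ≤ q.1 ∧ q.1 ≤ N - 1)
    (hdisj : ∀ x ∈ P, x ≠ q) :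
    Fval N P hne q = 1 := by
  have h0 := tele (cQ q) (phi q.1) (fun x => (0 ≤ x.2 ∧ x.2 ≤ N - 1) ∧ x ≠ q)
    (fun u v hu hv hadj => loc_end N q u v hq2 hadj hu.1 hv.1 hu.2 hv.2)
    P hne hch (fun x hx => ⟨hm x hx, hdisj x hx⟩)
  unfold Fval
  rw [h0]
  have hph : phi q.1 (P.head hne) = 1 := by unfold phi; rw [if_pos]; omega
  rw [hph]
  have hlb := hm _ (List.getLast_mem hne)
  have hlq := hdisj _ (List.getLast_mem hne)
  have hne2 : ¬((P.getLast hne).1 = q.1 ∧ (P.getLast hne).2 = q.2) :=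
    fun h => hlq (Prod.ext_iff.mpr h)
  unfold phi corr
  split_ifs <;> first | decide | (exfalso; omega)

lemma getElem_index_congr {α : Type*} (l : List α) (k1 k2 : ℕ) (e : k1 = k2)
    (h : k1 < l.length) : l[k1]'h = l[k2]'(e ▸ h) := by subst e; rfl

lemma extract_aux {α : Type*} (R : α → α → Prop) (l : List α) (hc : l.Chain' R)
    (P0 P1 : α → Prop) (i j : ℕ) (hij : i ≤ j) (hj : j < l.length)
    (h0 : P0 (l[i]'(by omega))) (h1 : P1 (l[j]'hj)) :
    ∃ (m : List α) (hm : m ≠ []), m.Chain' R ∧ (∀ x ∈ m, x ∈ l) ∧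
      P0 (m.head hm) ∧ P1 (m.getLast hm) := by
  set m := (l.drop i).take (j - i + 1) with hmdef
  have hlen : m.length = j - i + 1 := by
    simp only [hmdef, List.length_take, List.length_drop]; omega
  have hmne : m ≠ [] := by
    intro h; rw [h] at hlen; simp at hlen
  have hget : ∀ (k : ℕ) (hk : k < m.length), m[k]'hk = l[i + k]'(by omega) := by
    intro k hk
    simp only [hmdef, List.getElem_take, List.getElem_drop]
  refine ⟨m, hmne, ?_, ?_, ?_, ?_⟩
  · rw [List.Chain', List.isChain_iff_getElem] at hc ⊢
    intro k hk
    rw [hget k (by omega), hget (k + 1) (by omega)]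
    have h2 := hc (i + k) (by omega)
    rwa [getElem_index_congr l (i + k + 1) (i + (k + 1)) (by omega)] at h2
  · intro x hx
    rw [hmdef] at hx
    exact List.mem_of_mem_drop (List.mem_of_mem_take hx)
  · rw [List.head_eq_getElem hmne, hget 0 (by omega),
      getElem_index_congr l (i + 0) i (by omega)]
    exact h0
  · rw [List.getLast_eq_getElem hmne, hget (m.length - 1) (by omega),
      getElem_index_congr l (i + (m.length - 1)) j (by omega)]
    exact h1

lemma extract {α : Type*} (R : α → α → Prop) (hsym : ∀ a b, R a b → R b a)
    (l : List α) (hc : l.Chain' R) (P0 P1 : α → Prop)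
    (h0 : ∃ a ∈ l, P0 a) (h1 : ∃ b ∈ l, P1 b) :
    ∃ (m : List α) (hm : m ≠ []), m.Chain' R ∧ (∀ x ∈ m, x ∈ l) ∧
      P0 (m.head hm) ∧ P1 (m.getLast hm) := by
  obtain ⟨a, ha, hPa⟩ := h0
  obtain ⟨b, hb, hPb⟩ := h1
  obtain ⟨i, hi, hia⟩ := List.mem_iff_getElem.mp ha
  obtain ⟨j, hj, hjb⟩ := List.mem_iff_getElem.mp hb
  rcases le_total i j with hij | hji
  · exact extract_aux R l hc P0 P1 i j hij hj (by rw [hia]; exact hPa)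
      (by rw [hjb]; exact hPb)
  · have hcrev : l.reverse.Chain' R := by
      rw [List.Chain', List.isChain_reverse]
      exact hc.imp (fun a b h => hsym a b h)
    have hlr : l.reverse.length = l.length := by simp
    obtain ⟨m, hm, hch, hmem, hp0, hp1⟩ :=
      extract_aux R l.reverse hcrev P0 P1 (l.length - 1 - i) (l.length - 1 - j)
        (by omega) (by omega)
        (by rw [List.getElem_reverse, getElem_index_congr l _ i (by omega), hia]; exact hPa)
        (by rw [List.getElem_reverse, getElem_index_congr l _ j (by omega), hjb]; exact hPb)
    exact ⟨m, hm, hch, fun x hx => List.mem_reverse.mp (hmem x hx), hp0, hp1⟩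

lemma hexAdj_symm : ∀ a b : ℤ × ℤ, hexAdj a b → hexAdj b a := by
  intro a b h
  simp only [hexAdj, Set.mem_insert_iff, Set.mem_singleton_iff, Prod.mk.injEq] at h ⊢
  omega

end HexAux

open HexAux

/-- In finite Hex, no position admits simultaneously a Red winning chain and a Blue
winning chain. -/
theorem stmt10 (n : ℕ) (c : Fin n × Fin n → Option Bool) :
    ¬ (WinningChainPos n c true ∧ WinningChainPos n c false) := by
  rintro ⟨⟨lR, hRne, hRcol, hRch, hRside⟩, ⟨lB, hBne, hBcol, hBch, hBside⟩⟩
  rw [if_pos rfl] at hRside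
  rw [if_neg (by decide)] at hBside
  set N : ℤ := (n : ℤ) with hN
  have hn : 1 ≤ n := by
    rcases lR with _ | ⟨t, _⟩
    · exact absurd rfl hRne
    · have := t.1.isLt; omega
  set f : Fin n × Fin n → ℤ × ℤ := fun t => ((t.1 : ℤ), (t.2 : ℤ)) with hf
  have hbounds : ∀ (t : Fin n × Fin n),
      0 ≤ (f t).1 ∧ (f t).1 ≤ N - 1 ∧ 0 ≤ (f t).2 ∧ (f t).2 ≤ N - 1 := by
    intro t
    have h1 := t.1.isLt; have h2 := t.2.isLt
    simp only [hf]
    refine ⟨by positivity, ?_, by positivity, ?_⟩ <;> [skip; skip] <;>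
      · rw [hN]; omega
  have hchR : (lR.map f).Chain' hexAdj := by rw [List.Chain', List.isChain_map]; exact hRch
  have hchB : (lB.map f).Chain' hexAdj := by rw [List.Chain', List.isChain_map]; exact hBch
  -- disjointness of the two colour classes
  have hdisj : ∀ y ∈ lR.map f, ∀ x ∈ lB.map f, y ≠ x := by
    intro y hy x hx hxy
    obtain ⟨t, ht, rfl⟩ := List.mem_map.mp hy
    obtain ⟨t', ht', hft'⟩ := List.mem_map.mp hx
    have : t = t' := by
      have h := hxy.trans hft'.symm
      simp only [hf, Prod.mk.injEq] at h
      have : t.1 = t'.1 := Fin.ext (by exact_mod_cast h.1)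
      have h2 : t.2 = t'.2 := Fin.ext (by exact_mod_cast h.2)
      exact Prod.ext ‹t.1 = t'.1› h2
    rw [this] at ht
    have := (hRcol t' (by exact ht)).symm.trans (hBcol t' ht')
    simp at this
  -- extract the red path P
  obtain ⟨P, hPne, hPch, hPmem, hPhead, hPlast⟩ :=
    extract hexAdj hexAdj_symm (lR.map f) hchR (fun x => x.1 = 0) (fun x => x.1 = N - 1)
      (by
        obtain ⟨a, ha, h0⟩ := hRside.1
        exact ⟨f a, List.mem_map_of_mem ha, by simp only [hf]; exact_mod_cast h0⟩)
      (by
        obtain ⟨b, hb, h1⟩ := hRside.2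
        refine ⟨f b, List.mem_map_of_mem hb, ?_⟩
        simp only [hf]
        rw [hN]
        have : ((b.1 : ℕ) : ℤ) = ((n - 1 : ℕ) : ℤ) := by rw [h1]
        push_cast at this ⊢
        omega)
  -- extract the blue path Q
  obtain ⟨Q, hQne, hQch, hQmem, hQhead, hQlast⟩ :=
    extract hexAdj hexAdj_symm (lB.map f) hchB (fun x => x.2 = 0) (fun x => x.2 = N - 1)
      (by
        obtain ⟨a, ha, h0⟩ := hBside.1
        exact ⟨f a, List.mem_map_of_mem ha, by simp only [hf]; exact_mod_cast h0⟩)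
      (by
        obtain ⟨b, hb, h1⟩ := hBside.2
        refine ⟨f b, List.mem_map_of_mem hb, ?_⟩
        simp only [hf]
        rw [hN]
        have : ((b.2 : ℕ) : ℤ) = ((n - 1 : ℕ) : ℤ) := by rw [h1]
        push_cast at this ⊢
        omega)
  have hPb : ∀ x ∈ P, 0 ≤ x.1 ∧ x.1 ≤ N - 1 ∧ 0 ≤ x.2 ∧ x.2 ≤ N - 1 := by
    intro x hx
    obtain ⟨t, _, rfl⟩ := List.mem_map.mp (hPmem x hx)
    exact hbounds t
  have hQb : ∀ x ∈ Q, 0 ≤ x.1 ∧ x.1 ≤ N - 1 ∧ 0 ≤ x.2 ∧ x.2 ≤ N - 1 := by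
    intro x hx
    obtain ⟨t, _, rfl⟩ := List.mem_map.mp (hQmem x hx)
    exact hbounds t
  have hPQ : ∀ x ∈ Q, ∀ y ∈ P, y ≠ x :=
    fun x hx y hy => hdisj y (hPmem y hy) x (hQmem x hx)
  have h1 := Fconst N P hPne hPch hPhead hPlast Q hQne hQch
    (fun x hx => ⟨⟨(hQb x hx).1, (hQb x hx).2.1⟩, fun y hy => hPQ x hx y hy⟩)
  have h2 := Fzero N P hPne hPch (fun x hx => (hPb x hx).2.2.1) (Q.head hQne) hQhead
  have h3 := Fend N P hPne hPch hPhead hPlast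
    (fun x hx => ⟨(hPb x hx).2.2.1, (hPb x hx).2.2.2⟩)
    (Q.getLast hQne) hQlast
    ⟨(hQb _ (List.getLast_mem hQne)).1, (hQb _ (List.getLast_mem hQne)).2.1⟩
    (fun x hx => hPQ _ (List.getLast_mem hQne) x hx)
  rw [h2, h3] at h1
  exact absurd h1 (by decide)
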